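/- Let n ≥ 2, 0 < R₀ < R₁, μ ∈ ℝ, and let f : [R₀, R₁] → ℝ be a nonzero C² solution of f''(r) + ((n−1)/r) f'(r) − ((n−1)/r²) f(r) = −μ f(r) with f(R₀) = f(R₁) = 0 and f > 0 on (R₀, R₁). Then for each unit vector e ∈ ℝⁿ, the function u(x) = f(|x|)(x·e)/|x|, defined on the spherical shell Ω = {x : R₀ < |x| < R₁}, satisfies Δu = −μ u in Ω and u = 0 on ∂Ω, and u changes sign in Ω (it is positive where x·e > 0 and negative where x·e < 0). -/

import Mathlib

set_option maxHeartbeats 1000000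
open scoped RealInnerProductSpace

variable {E : Type*} [NormedAddCommGroup E] [InnerProductSpace ℝ E]

lemma myHasFDerivAt_norm (x : E) (hx : x ≠ 0) :
    HasFDerivAt (fun y : E => ‖y‖) ((‖x‖⁻¹ : ℝ) • (innerSL ℝ x)) x := by
  have h1 : HasFDerivAt (fun y : E => ‖y‖ ^ 2)
      ((2:ℕ) • (innerSL ℝ x)) x := by
    simpa using (hasFDerivAt_id x).norm_sq
  have hx2 : ‖x‖ ^ 2 ≠ 0 := pow_ne_zero 2 (norm_ne_zero_iff.mpr hx)
  have h2 := h1.sqrt hx2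
  have h3 : (fun y : E => Real.sqrt (‖y‖ ^ 2)) = fun y : E => ‖y‖ := by
    funext y; exact Real.sqrt_sq (norm_nonneg y)
  rw [h3] at h2
  convert h2 using 1
  ext v
  have hxn : ‖x‖ ≠ 0 := norm_ne_zero_iff.mpr hx
  simp [Real.sqrt_sq (norm_nonneg x)]
  field_simp

lemma innerR_hasFDerivAt (e x : E) :
    HasFDerivAt (fun y : E => (⟪y, e⟫ : ℝ)) (innerSL ℝ e) x := by
  have : (fun y : E => (⟪y, e⟫ : ℝ)) = fun y => innerSL ℝ e y := by
    funext y; simp [real_inner_comm]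
  rw [this]
  exact (innerSL ℝ e).hasFDerivAt

lemma key {n : ℕ} (R0 R1 μ : ℝ) (h0 : 0 < R0)
    (f : ℝ → ℝ) (hf : ContDiffOn ℝ 2 f (Set.Icc R0 R1))
    (hode : ∀ r ∈ Set.Ioo R0 R1,
      deriv (deriv f) r + ((n : ℝ) - 1) / r * deriv f r
        - ((n : ℝ) - 1) / r ^ 2 * f r = -μ * f r)
    (e : EuclideanSpace ℝ (Fin n))
    (u : EuclideanSpace ℝ (Fin n) → ℝ)
    (hu : ∀ x, u x = f ‖x‖ * ⟪x, e⟫ / ‖x‖)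
    (x : EuclideanSpace ℝ (Fin n)) (hx0 : R0 < ‖x‖) (hx1 : ‖x‖ < R1) :
    (∑ i, fderiv ℝ (fun y => fderiv ℝ u y (EuclideanSpace.single i 1)) x
      (EuclideanSpace.single i 1)) = -μ * u x := by
  -- setup
  set f1 := deriv f with hf1
  set f2 := deriv (deriv f) with hf2
  have hfIoo : ContDiffOn ℝ 2 f (Set.Ioo R0 R1) := hf.mono Set.Ioo_subset_Icc_self
  have hf1Ioo : ContDiffOn ℝ 1 f1 (Set.Ioo R0 R1) :=
    hfIoo.deriv_of_isOpen isOpen_Ioo (by norm_num)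
  have hfd : ∀ r ∈ Set.Ioo R0 R1, HasDerivAt f (f1 r) r := by
    intro r hr
    exact ((hfIoo.contDiffAt (isOpen_Ioo.mem_nhds hr)).differentiableAt
      (by norm_num)).hasDerivAt
  have hfd2 : ∀ r ∈ Set.Ioo R0 R1, HasDerivAt f1 (f2 r) r := by
    intro r hr
    exact ((hf1Ioo.contDiffAt (isOpen_Ioo.mem_nhds hr)).differentiableAt
      (by norm_num)).hasDerivAt
  set psi : ℝ → ℝ := fun r => (f1 r * r - f r) / r ^ 3 with hpsi
  set psi' : ℝ → ℝ := fun r =>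
    ((f2 r * r) * r ^ 3 - (f1 r * r - f r) * (3 * r ^ 2)) / (r ^ 3) ^ 2 with hpsi'
  have hpsid : ∀ r ∈ Set.Ioo R0 R1, HasDerivAt psi (psi' r) r := by
    intro r hr
    have hrne : r ≠ 0 := ne_of_gt (h0.trans hr.1)
    have hnum : HasDerivAt (fun s => f1 s * s - f s) (f2 r * r) r := by
      have := ((hfd2 r hr).mul (hasDerivAt_id r)).sub (hfd r hr)
      exact this.congr_deriv (by simp)
    have hden : HasDerivAt (fun s : ℝ => s ^ 3) (3 * r ^ 2) r := by
      simpa using hasDerivAt_pow 3 r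
    have := hnum.div hden (pow_ne_zero 3 hrne)
    exact this
  set S : Set (EuclideanSpace ℝ (Fin n)) := {y | R0 < ‖y‖ ∧ ‖y‖ < R1} with hSdef
  have hSopen : IsOpen S := by
    have : S = (fun y : EuclideanSpace ℝ (Fin n) => ‖y‖) ⁻¹' (Set.Ioo R0 R1) := by
      ext y; simp [hSdef, Set.mem_Ioo]
    rw [this]
    exact isOpen_Ioo.preimage continuous_norm
  have hxS : x ∈ S := ⟨hx0, hx1⟩
  have hmemIoo : ∀ y ∈ S, ‖y‖ ∈ Set.Ioo R0 R1 := fun y hy => ⟨hy.1, hy.2⟩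
  have hynz : ∀ y ∈ S, (y : EuclideanSpace ℝ (Fin n)) ≠ 0 := by
    intro y hy h
    have h1 : R0 < ‖y‖ := hy.1
    rw [h, norm_zero] at h1
    linarith
  -- the first derivative
  set Du : EuclideanSpace ℝ (Fin n) → (EuclideanSpace ℝ (Fin n) →L[ℝ] ℝ) := fun y =>
    (f ‖y‖ / ‖y‖) • (innerSL ℝ e) + ((psi ‖y‖) * ⟪y, e⟫) • (innerSL ℝ y) with hDu
  have hDU : ∀ y ∈ S, HasFDerivAt u (Du y) y := by
    intro y hy
    have hrpos : (0:ℝ) < ‖y‖ := h0.trans hy.1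
    have hrne : ‖y‖ ≠ 0 := ne_of_gt hrpos
    have hN : HasFDerivAt (fun z : EuclideanSpace ℝ (Fin n) => ‖z‖)
        ((‖y‖⁻¹ : ℝ) • (innerSL ℝ y)) y := myHasFDerivAt_norm y (hynz y hy)
    have hfN : HasFDerivAt (fun z : EuclideanSpace ℝ (Fin n) => f ‖z‖)
        (f1 ‖y‖ • ((‖y‖⁻¹ : ℝ) • (innerSL ℝ y))) y :=
      (hfd ‖y‖ (hmemIoo y hy)).comp_hasFDerivAt y hN
    have hC : HasFDerivAt (fun z : EuclideanSpace ℝ (Fin n) => (⟪z, e⟫ : ℝ))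
        (innerSL ℝ e) y := innerR_hasFDerivAt e y
    have hInv : HasFDerivAt (fun z : EuclideanSpace ℝ (Fin n) => (‖z‖)⁻¹)
        ((-(‖y‖ ^ 2)⁻¹ : ℝ) • ((‖y‖⁻¹ : ℝ) • (innerSL ℝ y))) y :=
      (hasDerivAt_inv hrne).comp_hasFDerivAt y hN
    have hdiv := (hfN.mul hC).mul hInv
    have hueq : u = fun z => f ‖z‖ * ⟪z, e⟫ * (‖z‖)⁻¹ := by
      funext z; rw [hu z, div_eq_mul_inv]
    rw [hueq]
    refine hdiv.congr_fderiv ?_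
    ext v
    simp only [hDu, ContinuousLinearMap.add_apply, ContinuousLinearMap.smul_apply,
      innerSL_apply_apply, smul_eq_mul, ContinuousLinearMap.coe_smul',
      Pi.smul_apply, hpsi, Pi.mul_apply]
    field_simp
    ring
  have hfderiv_eq : ∀ y ∈ S, fderiv ℝ u y = Du y := fun y hy => (hDU y hy).fderiv
  -- second derivatives
  have hr0 : (0:ℝ) < ‖x‖ := h0.trans hx0
  have hrne : ‖x‖ ≠ 0 := ne_of_gt hr0
  have hsecond : ∀ i : Fin n,
      fderiv ℝ (fun y => fderiv ℝ u y (EuclideanSpace.single i 1)) x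
        (EuclideanSpace.single i 1)
      = psi ‖x‖ * x i * e i + psi ‖x‖ * ⟪x, e⟫
        + x i * (psi ‖x‖ * e i + ⟪x, e⟫ * (psi' ‖x‖ * ‖x‖⁻¹ * x i)) := by
    intro i
    set g : EuclideanSpace ℝ (Fin n) → ℝ := fun y =>
      (f ‖y‖ * (‖y‖)⁻¹) * e i + ((psi ‖y‖) * ⟪y, e⟫) * y i with hg
    have hev : (fun y => fderiv ℝ u y (EuclideanSpace.single i 1)) =ᶠ[nhds x] g := by
      filter_upwards [hSopen.mem_nhds hxS] with y hy
      rw [hfderiv_eq y hy]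
      simp [hDu, hg, EuclideanSpace.inner_single_right, real_inner_comm, div_eq_mul_inv]
    rw [hev.fderiv_eq]
    -- now compute fderiv of g at x
    have hN : HasFDerivAt (fun z : EuclideanSpace ℝ (Fin n) => ‖z‖)
        ((‖x‖⁻¹ : ℝ) • (innerSL ℝ x)) x := myHasFDerivAt_norm x (hynz x hxS)
    have hfN : HasFDerivAt (fun z : EuclideanSpace ℝ (Fin n) => f ‖z‖)
        (f1 ‖x‖ • ((‖x‖⁻¹ : ℝ) • (innerSL ℝ x))) x :=
      (hfd ‖x‖ (hmemIoo x hxS)).comp_hasFDerivAt x hN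
    have hInv : HasFDerivAt (fun z : EuclideanSpace ℝ (Fin n) => (‖z‖)⁻¹)
        ((-(‖x‖ ^ 2)⁻¹ : ℝ) • ((‖x‖⁻¹ : ℝ) • (innerSL ℝ x))) x :=
      (hasDerivAt_inv hrne).comp_hasFDerivAt x hN
    have hA := hfN.mul hInv
    have hB : HasFDerivAt (fun z : EuclideanSpace ℝ (Fin n) => psi ‖z‖)
        (psi' ‖x‖ • ((‖x‖⁻¹ : ℝ) • (innerSL ℝ x))) x :=
      (hpsid ‖x‖ (hmemIoo x hxS)).comp_hasFDerivAt x hN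
    have hC : HasFDerivAt (fun z : EuclideanSpace ℝ (Fin n) => (⟪z, e⟫ : ℝ))
        (innerSL ℝ e) x := innerR_hasFDerivAt e x
    have hD : HasFDerivAt (fun z : EuclideanSpace ℝ (Fin n) => z i)
        (PiLp.proj 2 _ i : EuclideanSpace ℝ (Fin n) →L[ℝ] ℝ) x :=
      (PiLp.proj 2 _ i : EuclideanSpace ℝ (Fin n) →L[ℝ] ℝ).hasFDerivAt
    have hG := (hA.mul_const (e i)).add ((hB.mul hC).mul hD)
    rw [show fderiv ℝ g x = _ from hG.fderiv]
    simp only [ContinuousLinearMap.add_apply, ContinuousLinearMap.smul_apply,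
      ContinuousLinearMap.coe_smul', ContinuousLinearMap.coe_sub', Pi.smul_apply,
      innerSL_apply_apply, smul_eq_mul,
      PiLp.proj_apply, EuclideanSpace.inner_single_right,
      EuclideanSpace.single_apply, real_inner_comm, conj_trivial, Pi.mul_apply, if_true, hpsi]
    clear hG hA hB hC hD hN hfN hInv hev hDU hfderiv_eq hpsid hfd hfd2 hode hu hf hfIoo hf1Ioo
    field_simp [hrne]
    ring_nf
  have hxe : ∑ i, x i * e i = ⟪x, e⟫ := by
    simp [PiLp.inner_apply, RCLike.inner_apply, conj_trivial, mul_comm]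
  have hxx : ∑ i, x i * x i = ‖x‖ ^ 2 := by
    have := real_inner_self_eq_norm_sq x
    rw [← real_inner_self_eq_norm_sq]
    simp only [PiLp.inner_apply, RCLike.inner_apply, conj_trivial]
  have hsum : (∑ i, fderiv ℝ (fun y => fderiv ℝ u y (EuclideanSpace.single i 1)) x
      (EuclideanSpace.single i 1))
      = ∑ i : Fin n, ((2 * psi ‖x‖) * (x i * e i) + (psi ‖x‖ * ⟪x, e⟫)
        + (psi' ‖x‖ * ‖x‖⁻¹ * ⟪x, e⟫) * (x i * x i)) := by
    refine Finset.sum_congr rfl fun i _ => ?_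
    rw [hsecond i]; ring
  rw [hsum]
  have hsum2 : (∑ i : Fin n, ((2 * psi ‖x‖) * (x i * e i) + (psi ‖x‖ * ⟪x, e⟫)
        + (psi' ‖x‖ * ‖x‖⁻¹ * ⟪x, e⟫) * (x i * x i)))
      = (2 * psi ‖x‖) * ⟪x, e⟫ + (n : ℝ) * (psi ‖x‖ * ⟪x, e⟫)
        + (psi' ‖x‖ * ‖x‖⁻¹ * ⟪x, e⟫) * ‖x‖ ^ 2 := by
    rw [Finset.sum_add_distrib, Finset.sum_add_distrib, Finset.sum_const, Finset.card_univ,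
      Fintype.card_fin, ← Finset.mul_sum, ← Finset.mul_sum, hxe, hxx, nsmul_eq_mul]
  rw [hsum2, hu x]
  have hODE := hode ‖x‖ ⟨hx0, hx1⟩
  simp only [hpsi, hpsi', nsmul_eq_mul]
  field_simp [hrne] at hODE ⊢
  linear_combination ⟪x, e⟫ * hODE

/-- The Euclidean Laplacian: sum of the second partial derivatives. -/
noncomputable def lap {n : ℕ} (u : EuclideanSpace ℝ (Fin n) → ℝ)
    (x : EuclideanSpace ℝ (Fin n)) : ℝ :=
  ∑ i, fderiv ℝ (fun y => fderiv ℝ u y (EuclideanSpace.single i 1)) x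
    (EuclideanSpace.single i 1)

/-- from a positive solution `f` of the radial equation with angular
eigenvalue `n − 1`, vanishing at `R₀` and `R₁`, the function `u(x) = f(|x|)(x·e)/|x|`
is a sign-changing Dirichlet eigenfunction of the spherical shell with eigenvalue `μ`. -/
theorem stmt18 {n : ℕ} (hn : 2 ≤ n) (R0 R1 μ : ℝ) (h0 : 0 < R0) (h01 : R0 < R1)
    (f : ℝ → ℝ) (hf : ContDiffOn ℝ 2 f (Set.Icc R0 R1))
    (hode : ∀ r ∈ Set.Ioo R0 R1,
      deriv (deriv f) r + ((n : ℝ) - 1) / r * deriv f r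
        - ((n : ℝ) - 1) / r ^ 2 * f r = -μ * f r)
    (hfa : f R0 = 0) (hfb : f R1 = 0)
    (hfpos : ∀ r ∈ Set.Ioo R0 R1, 0 < f r)
    (e : EuclideanSpace ℝ (Fin n)) (he : ‖e‖ = 1)
    (u : EuclideanSpace ℝ (Fin n) → ℝ)
    (hu : ∀ x, u x = f ‖x‖ * ⟪x, e⟫ / ‖x‖)
    (Ω : Set (EuclideanSpace ℝ (Fin n)))
    (hΩ : Ω = {x | R0 < ‖x‖ ∧ ‖x‖ < R1}) :
    (∀ x ∈ Ω, lap u x = -μ * u x) ∧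
    (∀ x ∈ frontier Ω, u x = 0) ∧
    (∀ x ∈ Ω, (0 < ⟪x, e⟫ → 0 < u x) ∧ (⟪x, e⟫ < 0 → u x < 0)) := by
  have hΩ' : Ω = (fun y : EuclideanSpace ℝ (Fin n) => ‖y‖) ⁻¹' (Set.Ioo R0 R1) := by
    rw [hΩ]; ext y; simp [Set.mem_Ioo]
  refine ⟨?_, ?_, ?_⟩
  · intro x hx
    rw [hΩ] at hx
    exact key R0 R1 μ h0 f hf hode e u hu x hx.1 hx.2
  · intro x hx
    have hopen : IsOpen Ω := by
      rw [hΩ']; exact isOpen_Ioo.preimage continuous_norm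
    have hclos : closure Ω ⊆ (fun y : EuclideanSpace ℝ (Fin n) => ‖y‖) ⁻¹' (Set.Icc R0 R1) := by
      apply closure_minimal
      · rw [hΩ']
        exact Set.preimage_mono Set.Ioo_subset_Icc_self
      · exact IsClosed.preimage continuous_norm isClosed_Icc
    have h1 : x ∈ closure Ω := hx.1
    have h2 : x ∉ Ω := by
      intro hmem
      exact hx.2 (interior_maximal le_rfl hopen hmem)
    have h3 : ‖x‖ ∈ Set.Icc R0 R1 := hclos h1
    have h4 : ‖x‖ = R0 ∨ ‖x‖ = R1 := by
      rw [hΩ] at h2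
      simp only [Set.mem_setOf_eq, not_and, not_lt] at h2
      rcases lt_or_eq_of_le h3.1 with h | h
      · exact Or.inr (le_antisymm h3.2 (h2 h))
      · exact Or.inl h.symm
    have h5 : f ‖x‖ = 0 := by
      rcases h4 with h | h <;> rw [h] <;> assumption
    rw [hu x, h5, zero_mul, zero_div]
  · intro x hx
    rw [hΩ] at hx
    have hr0 : (0:ℝ) < ‖x‖ := h0.trans hx.1
    have hfx : 0 < f ‖x‖ := hfpos ‖x‖ ⟨hx.1, hx.2⟩
    constructor
    · intro hpos
      rw [hu x]
      exact div_pos (mul_pos hfx hpos) hr0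
    · intro hneg
      rw [hu x]
      exact div_neg_of_neg_of_pos (mul_neg_of_pos_of_neg hfx hneg) hr0
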